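/- An integral domain D is a valuation domain if and only if every nonzero prime ideal of D contains a comparable element. -/

import Mathlib

open scoped nonZeroDivisors

/-- A nonzero element `c` of a domain `D` is comparable if for every `x ∈ D`,
either `cD ⊆ xD` or `xD ⊆ cD`. -/
def IsComparable {D : Type*} [CommRing D] (c : D) : Prop :=
  c ≠ 0 ∧ ∀ x : D, Ideal.span {c} ≤ Ideal.span {x} ∨ Ideal.span {x} ≤ Ideal.span {c}

theorem isComparable_iff_dvd {D : Type*} [CommRing D] (c : D) :
    IsComparable c ↔ c ≠ 0 ∧ ∀ x : D, x ∣ c ∨ c ∣ x := by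
  simp [IsComparable, Ideal.span_singleton_le_span_singleton, Ideal.mem_span_singleton]

/-- An integral domain `D` is a valuation domain if and only if every nonzero prime
ideal of `D` contains a comparable element. -/
theorem valuationRing_iff_primes_contain_comparable (D : Type*) [CommRing D]
    [IsDomain D] :
    ValuationRing D ↔
      ∀ P : Ideal D, P.IsPrime → P ≠ ⊥ → ∃ c ∈ P, IsComparable c := by
  rw [ValuationRing.iff_dvd_total]
  constructor
  · intro h P _ hPne
    obtain ⟨c, hcP, hc0⟩ := Submodule.exists_mem_ne_zero_of_ne_bot hPne
    exact ⟨c, hcP, (isComparable_iff_dvd c).2 ⟨hc0, fun x => h.total x c⟩⟩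
  · intro h
    -- the comparable elements form a submonoid
    set S : Submonoid D :=
      { carrier := {c | IsComparable c}
        one_mem' := (isComparable_iff_dvd 1).2 ⟨one_ne_zero, fun x => Or.inr (one_dvd x)⟩
        mul_mem' := by
          rintro c d hc hd
          simp only [Set.mem_setOf_eq, isComparable_iff_dvd] at hc hd ⊢
          refine ⟨mul_ne_zero hc.1 hd.1, fun x => ?_⟩
          rcases hc.2 x with hx | ⟨x', rfl⟩
          · exact Or.inl (hx.mul_right d)
          rcases hd.2 x' with hx | hx
          · exact Or.inl (mul_dvd_mul_left c hx)
          · exact Or.inr (mul_dvd_mul_left c hx) } with hS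
    constructor
    intro a b
    rcases eq_or_ne a 0 with rfl | ha
    · exact Or.inr (dvd_zero b)
    -- some multiple of `a` is comparable
    have key : ∃ c, IsComparable c ∧ a ∣ c := by
      by_contra hno
      push_neg at hno
      have hdisj : Disjoint (Ideal.span {a} : Set D) (S : Set D) := by
        rw [Set.disjoint_left]
        intro x hx hxS
        exact hno x hxS (Ideal.mem_span_singleton.1 hx)
      obtain ⟨P, hPprime, hle, hPdisj⟩ := Ideal.exists_le_prime_disjoint _ S hdisj
      have hPne : P ≠ ⊥ := by
        intro hbot
        exact ha (Ideal.span_singleton_eq_bot.1 (le_bot_iff.1 (hbot ▸ hle)))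
      obtain ⟨c, hcP, hcS⟩ := h P hPprime hPne
      exact Set.disjoint_left.1 hPdisj hcP hcS
    obtain ⟨c, hc, y, rfl⟩ := key
    rw [isComparable_iff_dvd] at hc
    have hy : y ≠ 0 := fun hy => hc.1 (by simp [hy])
    rcases hc.2 (b * y) with hd | hd
    · exact Or.inr ((mul_dvd_mul_iff_right hy).1 hd)
    · exact Or.inl ((mul_dvd_mul_iff_right hy).1 hd)
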